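/- (Fatou's boundary continuity theorem for the Poisson integral) Let f be a 2π-periodic integrable function on [−π, π] and let U(re^{iθ}) = (1/2π)∫_{−π}^{π} f(t) p_r(θ − t) dt be its Poisson integral in the open unit disc. If f is continuous at θ₀, then U(z) → f(θ₀) as z → e^{iθ₀} with z in the open unit disc (unrestricted approach). -/

import Mathlib

open Filter Set Real MeasureTheory Complex

/-- The Poisson kernel `p_r(θ) = (1 - r²)/(1 - 2r cos θ + r²)`. -/
noncomputable def fatouPoissonKernel (r θ : ℝ) : ℝ :=
  (1 - r ^ 2) / (1 - 2 * r * Real.cos θ + r ^ 2)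

namespace FatouAux

lemma denom_pos {r : ℝ} (hr0 : 0 ≤ r) (hr1 : r < 1) (θ : ℝ) :
    0 < 1 - 2 * r * Real.cos θ + r ^ 2 := by
  nlinarith [Real.cos_le_one θ, sq_nonneg (1 - r),
    mul_nonneg hr0 (sub_nonneg.mpr (Real.cos_le_one θ))]

lemma kernel_nonneg {r : ℝ} (hr0 : 0 ≤ r) (hr1 : r < 1) (θ : ℝ) :
    0 ≤ fatouPoissonKernel r θ := by
  have h := denom_pos hr0 hr1 θ
  have h2 : (0:ℝ) ≤ 1 - r ^ 2 := by nlinarith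
  exact div_nonneg h2 h.le

lemma continuous_kernel {r : ℝ} (hr0 : 0 ≤ r) (hr1 : r < 1) :
    Continuous (fatouPoissonKernel r) :=
  continuous_const.div (by continuity) (fun θ => (denom_pos hr0 hr1 θ).ne')

lemma kernel_periodic (r : ℝ) : Function.Periodic (fatouPoissonKernel r) (2 * π) := by
  intro θ
  simp [fatouPoissonKernel, Real.cos_add_two_pi]

lemma hasDeriv_F {r : ℝ} (hr0 : 0 ≤ r) (hr1 : r < 1) {θ : ℝ} (hθ : θ ∈ Set.Ioo (-π) π) :
    HasDerivAt (fun x => 2 * Real.arctan ((1 + r) / (1 - r) * Real.tan (x / 2)))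
      (fatouPoissonKernel r θ) θ := by
  obtain ⟨h1, h2⟩ := hθ
  have hcpos : 0 < Real.cos (θ / 2) :=
    Real.cos_pos_of_mem_Ioo ⟨by linarith, by linarith⟩
  have hc : Real.cos (θ / 2) ≠ 0 := hcpos.ne'
  have hr : (1 : ℝ) - r ≠ 0 := by linarith
  set k : ℝ := (1 + r) / (1 - r) with hk
  have hhalf : HasDerivAt (fun x : ℝ => x / 2) (1 / 2) θ := by
    simpa using (hasDerivAt_id θ).div_const 2
  have htan : HasDerivAt (fun x : ℝ => Real.tan (x / 2))
      (1 / Real.cos (θ / 2) ^ 2 * (1 / 2)) θ :=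
    by have := (Real.hasDerivAt_tan hc).comp θ hhalf; exact this
  have hmul : HasDerivAt (fun x : ℝ => k * Real.tan (x / 2))
      (k * (1 / Real.cos (θ / 2) ^ 2 * (1 / 2))) θ := htan.const_mul k
  have harc : HasDerivAt (fun x : ℝ => Real.arctan (k * Real.tan (x / 2)))
      (1 / (1 + (k * Real.tan (θ / 2)) ^ 2) * (k * (1 / Real.cos (θ / 2) ^ 2 * (1 / 2)))) θ :=
    (Real.hasDerivAt_arctan _).comp θ hmul
  have := harc.const_mul (2 : ℝ)
  refine this.congr_deriv (Eq.symm ?_)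
  have hcosθ : Real.cos θ = 2 * Real.cos (θ / 2) ^ 2 - 1 := by
    rw [show θ = 2 * (θ / 2) by ring, Real.cos_two_mul]
    ring_nf
  have ht2 : Real.tan (θ / 2) ^ 2 = 1 / Real.cos (θ / 2) ^ 2 - 1 := by
    rw [Real.tan_eq_sin_div_cos, div_pow]
    have hs := Real.sin_sq_add_cos_sq (θ / 2)
    field_simp
    linarith
  set c2 := Real.cos (θ / 2) ^ 2 with hc2def
  have hc2pos : 0 < c2 := pow_pos hcpos 2
  have hc2le : c2 ≤ 1 := Real.cos_sq_le_one _
  have hcosθ2 : Real.cos θ = 2 * c2 - 1 := hcosθ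
  have hkpos : 0 < k := div_pos (by linarith) (by linarith)
  have hDpos : 0 < c2 + k ^ 2 * (1 - c2) := by nlinarith [sq_nonneg k]
  have hTpos : 0 < 1 + (k * Real.tan (θ / 2)) ^ 2 := by positivity
  rw [fatouPoissonKernel, hcosθ2]
  have hT2 : (0:ℝ) < 1 + k ^ 2 * (1 / c2 - 1) := by
    have he : 1 + k ^ 2 * (1 / c2 - 1) = (c2 + k ^ 2 * (1 - c2)) / c2 := by
      field_simp
    rw [he]
    positivity
  have hstep1 : 2 * (1 / (1 + (k * Real.tan (θ / 2)) ^ 2) *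
      (k * (1 / c2 * (1 / 2)))) = k / (c2 + k ^ 2 * (1 - c2)) := by
    rw [mul_pow, ht2]
    field_simp
  rw [hstep1, div_eq_div_iff (by nlinarith) hDpos.ne', hk]
  field_simp
  ring


lemma kernel_integral {r : ℝ} (hr0 : 0 ≤ r) (hr1 : r < 1) :
    ∫ θ in (-π)..π, fatouPoissonKernel r θ = 2 * π := by
  have hcont := continuous_kernel hr0 hr1
  have hii : ∀ a b : ℝ, IntervalIntegrable (fatouPoissonKernel r) volume a b :=
    fun a b => hcont.intervalIntegrable a b
  have hr : (0:ℝ) < 1 - r := by linarith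
  set k : ℝ := (1 + r) / (1 - r) with hk
  have hkpos : 0 < k := div_pos (by linarith) hr
  set F : ℝ → ℝ := fun x => 2 * Real.arctan (k * Real.tan (x / 2)) with hF
  set G : ℝ → ℝ := fun x => ∫ θ in (-x)..x, fatouPoissonKernel r θ with hG
  have hGeq : ∀ x : ℝ, G x = (∫ θ in (-π)..x, fatouPoissonKernel r θ)
      - ∫ θ in (-π)..(-x), fatouPoissonKernel r θ := fun x =>
    (intervalIntegral.integral_interval_sub_left (hii _ _) (hii _ _)).symm
  have hGcont : Continuous G := by
    have h1 := intervalIntegral.continuous_primitive hii (-π)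
    have : Continuous fun x : ℝ =>
        (∫ θ in (-π)..x, fatouPoissonKernel r θ) - ∫ θ in (-π)..(-x), fatouPoissonKernel r θ :=
      h1.sub (h1.comp continuous_neg)
    exact (funext hGeq : G = _) ▸ this
  have hkey : ∀ x ∈ Set.Ioo (0:ℝ) π, G x = F x - F (-x) := by
    intro x hx
    exact intervalIntegral.integral_eq_sub_of_hasDerivAt
      (fun t ht => by
        rcases Set.mem_uIcc.1 ht with h | h
        · exact hasDeriv_F hr0 hr1 ⟨by cases hx; linarith [h.1], by cases hx; linarith [h.2]⟩
        · exact hasDeriv_F hr0 hr1 ⟨by cases hx; linarith [h.1], by cases hx; linarith [h.2]⟩)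
      (hii _ _)
  -- limit of F x - F (-x) as x → π from the left
  have hhalf : Tendsto (fun x : ℝ => x / 2) (nhdsWithin π (Set.Iio π)) (nhdsWithin (π/2) (Set.Iio (π/2))) := by
    apply tendsto_nhdsWithin_of_tendsto_nhds_of_eventually_within
    · exact (tendsto_id.div_const 2).mono_left nhdsWithin_le_nhds
    · filter_upwards [self_mem_nhdsWithin] with x hx
      simp only [Set.mem_Iio] at hx ⊢
      linarith
  have htan : Tendsto (fun x : ℝ => Real.tan (x / 2)) (nhdsWithin π (Set.Iio π)) atTop :=
    Real.tendsto_tan_pi_div_two.comp hhalf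
  have hktan : Tendsto (fun x : ℝ => k * Real.tan (x / 2)) (nhdsWithin π (Set.Iio π)) atTop :=
    htan.const_mul_atTop hkpos
  have harctan : Tendsto (fun x : ℝ => Real.arctan (k * Real.tan (x / 2)))
      (nhdsWithin π (Set.Iio π)) (nhds (π/2)) :=
    (Real.tendsto_arctan_atTop.mono_right nhdsWithin_le_nhds).comp hktan
  have hFlim : Tendsto (fun x => F x - F (-x)) (nhdsWithin π (Set.Iio π)) (nhds (2*π)) := by
    have hFodd : ∀ x, F (-x) = - F x := by
      intro x
      simp only [hF]
      rw [show -x / 2 = -(x/2) by ring, Real.tan_neg, mul_neg, Real.arctan_neg]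
      ring
    have : (fun x => F x - F (-x)) = fun x => 4 * Real.arctan (k * Real.tan (x / 2)) := by
      funext x; rw [hFodd x]; simp only [hF]; ring
    rw [this]
    have := harctan.const_mul (4:ℝ)
    convert this using 2
    ring
  have hGlim : Tendsto G (nhdsWithin π (Set.Iio π)) (nhds (G π)) :=
    hGcont.continuousAt.tendsto.mono_left nhdsWithin_le_nhds
  have heq : G =ᶠ[nhdsWithin π (Set.Iio π)] fun x => F x - F (-x) := by
    filter_upwards [Ioo_mem_nhdsLT_of_mem (Set.mem_Ioc.2 ⟨Real.pi_pos, le_rfl⟩)] with x hx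
    exact hkey x hx
  have := hGlim.congr' heq
  exact tendsto_nhds_unique this hFlim

lemma kernel_integral_shift {r : ℝ} (hr0 : 0 ≤ r) (hr1 : r < 1) (θ a : ℝ) :
    ∫ t in a..(a + 2*π), fatouPoissonKernel r (θ - t) = 2 * π := by
  have hper : Function.Periodic (fun t => fatouPoissonKernel r (θ - t)) (2*π) := by
    intro t
    simp only
    rw [show θ - (t + 2*π) = (θ - t) - 2*π by ring]
    exact (kernel_periodic r).sub_eq (θ - t)
  rw [hper.intervalIntegral_add_eq a (θ - π)]
  rw [show θ - π + 2*π = θ + π by ring]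
  rw [intervalIntegral.integral_comp_sub_left (fatouPoissonKernel r) θ]
  rw [show θ - (θ + π) = -π by ring, show θ - (θ - π) = π by ring]
  exact kernel_integral hr0 hr1



lemma per_intervalIntegrable {f : ℝ → ℝ} (hper : Function.Periodic f (2*π))
    (hint : IntervalIntegrable f volume (-π) π) (a b : ℝ) :
    IntervalIntegrable f volume a b := by
  have base : ∀ k : ℤ, IntervalIntegrable f volume (-π + k*(2*π)) (π + k*(2*π)) := by
    intro k
    have h1 := hint.comp_add_right (-(k*(2*π)))
    have h2 : (fun x => f (x + -(k*(2*π)))) = f := by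
      funext x
      rw [← sub_eq_add_neg]
      exact hper.sub_int_mul_eq k
    rw [h2] at h1
    simpa [sub_neg_eq_add, add_comm] using h1
  have chain : ∀ n : ℕ, IntervalIntegrable f volume (-π - n*(2*π)) (π + n*(2*π)) := by
    intro n
    induction n with
    | zero => simpa using hint
    | succ n ih =>
        have hl := base (-(n+1) : ℤ)
        have hr := base ((n+1) : ℤ)
        have e1 : -π + ((-(n+1) : ℤ) : ℝ)*(2*π) = -π - (n+1 : ℕ)*(2*π) := by push_cast; ring
        have e2 : π + ((-(n+1) : ℤ) : ℝ)*(2*π) = -π - (n : ℕ)*(2*π) := by push_cast; ring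
        have e3 : -π + (((n+1) : ℤ) : ℝ)*(2*π) = π + (n : ℕ)*(2*π) := by push_cast; ring
        have e4 : π + (((n+1) : ℤ) : ℝ)*(2*π) = π + (n+1 : ℕ)*(2*π) := by push_cast; ring
        rw [e1, e2] at hl
        rw [e3, e4] at hr
        exact (hl.trans ih).trans hr
  obtain ⟨n, hn⟩ := exists_nat_ge (|a| + |b|)
  have hπ := Real.pi_pos
  have h2π : (n:ℝ) ≤ n*(2*π) := by nlinarith [Real.pi_gt_three, Nat.cast_nonneg (α := ℝ) n]
  apply (chain n).mono_set
  rw [Set.uIcc_subset_uIcc_iff_le]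
  have hna := neg_abs_le a
  have hnb := neg_abs_le b
  have hba := le_abs_self a
  have hbb := le_abs_self b
  have h0a := abs_nonneg a
  have h0b := abs_nonneg b
  constructor
  · exact le_trans (min_le_left _ _) (le_min (by linarith) (by linarith))
  · exact le_trans (max_le (by linarith) (by linarith)) (le_max_right _ _)



lemma abs_exp_sub_exp (α β : ℝ) :
    ‖Complex.exp (α*Complex.I) - Complex.exp (β*Complex.I)‖
      = 2 * |Real.sin ((α-β)/2)| := by
  have key : Complex.exp (α*Complex.I) - Complex.exp (β*Complex.I)
      = Complex.exp ((((α+β)/2 : ℝ))*Complex.I) *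
        (Complex.exp ((((α-β)/2 : ℝ))*Complex.I) - Complex.exp (((-((α-β)/2) : ℝ))*Complex.I)) := by
    rw [mul_sub, ← Complex.exp_add, ← Complex.exp_add]
    congr 2 <;> push_cast <;> ring
  rw [key, norm_mul, Complex.norm_exp_ofReal_mul_I, one_mul]
  set x : ℝ := (α - β)/2
  have h2 : Complex.exp ((x:ℂ)*Complex.I) - Complex.exp (((-x : ℝ):ℂ)*Complex.I)
      = 2 * (Real.sin x : ℂ) * Complex.I := by
    rw [Complex.exp_mul_I, Complex.exp_mul_I]
    push_cast
    rw [Complex.cos_neg, Complex.sin_neg]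
    ring
  rw [h2, norm_mul, norm_mul, Complex.norm_I, Complex.norm_two, Complex.norm_real, Real.norm_eq_abs]
  ring

lemma angle_close {α β d : ℝ}
    (h : ‖Complex.exp (α*Complex.I) - Complex.exp (β*Complex.I)‖ ≤ d) :
    ∃ k : ℤ, |α - (β + 2*π*k)| ≤ (π/2) * d := by
  have hπ := Real.pi_pos
  set x : ℝ := α - β with hx
  set k : ℤ := round (x / (2*π)) with hk
  refine ⟨k, ?_⟩
  have hab : α - (β + 2*π*k) = x - 2*π*k := by rw [hx]; ring
  rw [hab]
  set x' : ℝ := x - 2*π*k with hx'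
  have hx'le : |x'| ≤ π := by
    have h1 := abs_sub_round (x / (2*π))
    have h3 : x' = (x / (2*π) - k) * (2*π) := by rw [hx']; field_simp
    rw [h3, abs_mul, abs_of_pos (show (0:ℝ) < 2*π by linarith)]
    nlinarith [h1]
  -- |sin (x/2)| = |sin (x'/2)|
  have hsin_eq : |Real.sin (x/2)| = |Real.sin (x'/2)| := by
    have : x/2 = x'/2 + k * π := by rw [hx']; ring
    rw [this]
    rcases Int.even_or_odd k with ⟨m, hm⟩ | ⟨m, hm⟩
    · rw [hm]
      push_cast
      rw [show (x'/2 + ((m:ℝ) + m) * π) = x'/2 + (m:ℝ)*(2*π) by ring]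
      rw [Real.sin_add_int_mul_two_pi]
    · rw [hm]
      push_cast
      rw [show (x'/2 + (2*(m:ℝ) + 1) * π) = (x'/2 + π) + (m:ℝ)*(2*π) by ring]
      rw [Real.sin_add_int_mul_two_pi, Real.sin_add_pi, abs_neg]
  have habs := abs_nonneg x'
  have hsabs : Real.sin (|x'|/2) = |Real.sin (x'/2)| := by
    rcases le_or_gt 0 x' with hpos | hneg
    · rw [_root_.abs_of_nonneg hpos,
        _root_.abs_of_nonneg (Real.sin_nonneg_of_nonneg_of_le_pi (by positivity)
          (by rw [_root_.abs_of_nonneg hpos] at hx'le; linarith))]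
    · rw [abs_of_neg hneg, show -x'/2 = -(x'/2) by ring, Real.sin_neg,
        abs_of_nonpos (Real.sin_nonpos_of_nonpos_of_neg_pi_le (by linarith)
          (by rw [abs_of_neg hneg] at hx'le; linarith))]
  have h1 : 2/π * (|x'|/2) ≤ Real.sin (|x'|/2) :=
    Real.mul_le_sin (by positivity) (by linarith [hx'le])
  have hlow : |x'| ≤ π * |Real.sin (x'/2)| := by
    rw [← hsabs]
    rw [div_mul_eq_mul_div, mul_div_assoc] at h1
    calc |x'| = π * (2 * (|x'| / 2 / π)) := by field_simp
    _ ≤ π * Real.sin (|x'|/2) := mul_le_mul_of_nonneg_left h1 (le_of_lt hπ)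
  have hd : 2 * |Real.sin (x/2)| ≤ d := by rw [← abs_exp_sub_exp α β]; exact h
  calc |x'| ≤ π * |Real.sin (x'/2)| := hlow
  _ = (π/2) * (2 * |Real.sin (x/2)|) := by rw [hsin_eq]; ring
  _ ≤ (π/2) * d := by nlinarith [hd]



lemma cos_far {δ u : ℝ} (hδ0 : 0 < δ) (hδπ : δ ≤ π/2) (h1 : δ/2 ≤ |u|) (h2 : |u| ≤ 2*π - δ/2) :
    Real.cos u ≤ Real.cos (δ/2) := by
  have hπ := Real.pi_pos
  rw [← Real.cos_abs u]
  rcases le_or_gt |u| π with hle | hgt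
  · exact Real.cos_le_cos_of_nonneg_of_le_pi (by linarith) hle h1
  · have he : Real.cos |u| = Real.cos (2*π - |u|) := (Real.cos_two_pi_sub |u|).symm
    rw [he]
    exact Real.cos_le_cos_of_nonneg_of_le_pi (by linarith) (by linarith) (by linarith)

lemma kernel_bound {r c u : ℝ} (hr0 : 0 ≤ r) (hr1 : r < 1) (hc0 : 0 ≤ c) (hc1 : c < 1)
    (hc : Real.cos u ≤ c) :
    fatouPoissonKernel r u ≤ (1 - r^2) / (1 - c^2) := by
  have h0 : (0:ℝ) < 1 - c^2 := by nlinarith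
  have hd : 1 - c^2 ≤ 1 - 2*r*Real.cos u + r^2 := by
    nlinarith [sq_nonneg (c - r), mul_nonneg hr0 (sub_nonneg.2 hc)]
  rw [fatouPoissonKernel]
  gcongr
  nlinarith

lemma key (f : ℝ → ℝ) (hper : Function.Periodic f (2*π))
    (hf : ∀ a b, IntervalIntegrable f volume a b)
    (θ₀' θ r δ₁ ε' : ℝ) (hr0 : 0 ≤ r) (hr1 : r < 1)
    (hδ₁0 : 0 < δ₁) (hδ₁π : δ₁ ≤ π / 2)
    (hθ : |θ - θ₀'| ≤ δ₁ / 2)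
    (hnear : ∀ t, |t - θ₀'| ≤ δ₁ → |f t - f θ₀'| ≤ ε') :
    |(1/(2*π)) * (∫ t in (-π)..π, f t * fatouPoissonKernel r (θ - t)) - f θ₀'|
      ≤ ε' + (1 - r^2) / (1 - Real.cos (δ₁/2)^2) *
          (∫ t in (-π)..π, |f t - f θ₀'|) / π := by
  have hπ := Real.pi_pos
  have hθ1 := abs_le.1 hθ
  set c := Real.cos (δ₁/2) with hcdef
  have hc0 : 0 < c := Real.cos_pos_of_mem_Ioo ⟨by linarith, by linarith⟩
  have hc1 : c < 1 := by
    have := Real.cos_lt_cos_of_nonneg_of_le_pi (le_refl (0:ℝ)) (by linarith : δ₁/2 ≤ π)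
      (by linarith : (0:ℝ) < δ₁/2)
    simpa using this
  set B : ℝ := (1 - r^2) / (1 - c^2) with hBdef
  have hB0 : 0 ≤ B := div_nonneg (by nlinarith) (by nlinarith)
  set g : ℝ → ℝ := fun t => f t - f θ₀' with hgdef
  have hgper : Function.Periodic g (2*π) := fun t => by simp [hgdef, hper t]
  have hgaper : Function.Periodic (fun t => |g t|) (2*π) := fun t => by simp [hgper t]
  have hgint : ∀ a b, IntervalIntegrable g volume a b :=
    fun a b => (hf a b).sub intervalIntegrable_const
  set K : ℝ → ℝ := fun t => fatouPoissonKernel r (θ - t) with hKdef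
  have hKcont : Continuous K :=
    (continuous_kernel hr0 hr1).comp (continuous_const.sub continuous_id)
  have hKper : Function.Periodic K (2*π) := fun t => by
    simp only [hKdef]
    rw [show θ - (t + 2*π) = (θ - t) - 2*π by ring]
    exact (kernel_periodic r).sub_eq _
  have hK0 : ∀ t, 0 ≤ K t := fun t => kernel_nonneg hr0 hr1 _
  set a : ℝ := θ₀' - π with hadef
  have ha2 : a + 2*π = θ₀' + π := by rw [hadef]; ring
  have hKint : ∀ u v : ℝ, IntervalIntegrable K volume u v :=
    fun u v => hKcont.intervalIntegrable u v
  have hfK : ∀ u v : ℝ, IntervalIntegrable (fun t => f t * K t) volume u v :=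
    fun u v => (hf u v).mul_continuousOn hKcont.continuousOn
  have hgK : ∀ u v : ℝ, IntervalIntegrable (fun t => |g t| * K t) volume u v :=
    fun u v => (hgint u v).abs.mul_continuousOn hKcont.continuousOn
  have hshift : (∫ t in (-π)..π, f t * K t) = ∫ t in a..(a+2*π), f t * K t := by
    have hp : Function.Periodic (fun t => f t * K t) (2*π) := fun t => by
      simp only [hper t, hKper t]
    have h := hp.intervalIntegral_add_eq (-π) a
    rw [show -π + 2*π = π by ring] at h
    exact h
  have hnorm : (∫ t in a..(a+2*π), K t) = 2*π := kernel_integral_shift hr0 hr1 θ a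
  have hdiff : (1/(2*π)) * (∫ t in (-π)..π, f t * K t) - f θ₀'
      = (1/(2*π)) * (∫ t in a..(a+2*π), g t * K t) := by
    rw [hshift]
    have h2 : (∫ t in a..(a+2*π), g t * K t)
        = (∫ t in a..(a+2*π), f t * K t) - f θ₀' * ∫ t in a..(a+2*π), K t := by
      rw [← intervalIntegral.integral_const_mul,
        ← intervalIntegral.integral_sub (hfK _ _) ((hKint _ _).const_mul _)]
      congr 1
      funext t
      simp only [hgdef]
      ring
    rw [h2, hnorm]
    field_simp
  have habs : |(1/(2*π)) * (∫ t in a..(a+2*π), g t * K t)|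
      ≤ (1/(2*π)) * (∫ t in a..(a+2*π), |g t| * K t) := by
    rw [abs_mul, _root_.abs_of_nonneg (by positivity : (0:ℝ) ≤ 1/(2*π))]
    apply mul_le_mul_of_nonneg_left _ (by positivity)
    calc |∫ t in a..(a+2*π), g t * K t| ≤ ∫ t in a..(a+2*π), |g t * K t| :=
          intervalIntegral.abs_integral_le_integral_abs (by linarith)
    _ = ∫ t in a..(a+2*π), |g t| * K t := by
          congr 1
          funext t
          rw [abs_mul, _root_.abs_of_nonneg (hK0 t)]
  have hsplit : (∫ t in a..(a+2*π), |g t| * K t)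
      = (∫ t in a..(θ₀'-δ₁), |g t| * K t) + ((∫ t in (θ₀'-δ₁)..(θ₀'+δ₁), |g t| * K t)
        + ∫ t in (θ₀'+δ₁)..(a+2*π), |g t| * K t) := by
    rw [intervalIntegral.integral_add_adjacent_intervals (hgK (θ₀'-δ₁) (θ₀'+δ₁)) (hgK (θ₀'+δ₁) (a+2*π)),
      intervalIntegral.integral_add_adjacent_intervals (hgK a (θ₀'-δ₁)) (hgK (θ₀'-δ₁) (a+2*π))]
  have hε'0 : 0 ≤ ε' := le_trans (abs_nonneg _) (hnear θ₀' (by simp; linarith))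
  set M : ℝ := ∫ t in (-π)..π, |f t - f θ₀'| with hMdef
  have hM0 : 0 ≤ M := by
    rw [hMdef]
    apply intervalIntegral.integral_nonneg (by linarith)
    intro t _
    exact abs_nonneg _
  have hMshift : (∫ t in a..(a+2*π), |g t|) = M := by
    have h := hgaper.intervalIntegral_add_eq a (-π)
    rw [show -π + 2*π = π by ring] at h
    rw [h]
  have hmid : (∫ t in (θ₀'-δ₁)..(θ₀'+δ₁), |g t| * K t) ≤ ε' * (2*π) := by
    have step1 : (∫ t in (θ₀'-δ₁)..(θ₀'+δ₁), |g t| * K t)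
        ≤ ∫ t in (θ₀'-δ₁)..(θ₀'+δ₁), ε' * K t := by
      apply intervalIntegral.integral_mono_on (by linarith) (hgK _ _) ((hKint _ _).const_mul _)
      intro t ht
      apply mul_le_mul_of_nonneg_right _ (hK0 t)
      apply hnear
      rw [abs_le]
      exact ⟨by linarith [ht.1], by linarith [ht.2]⟩
    have step2 : (∫ t in (θ₀'-δ₁)..(θ₀'+δ₁), ε' * K t)
        = ε' * ∫ t in (θ₀'-δ₁)..(θ₀'+δ₁), K t := intervalIntegral.integral_const_mul _ _
    have step3 : (∫ t in (θ₀'-δ₁)..(θ₀'+δ₁), K t) ≤ ∫ t in a..(a+2*π), K t := by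
      apply intervalIntegral.integral_mono_interval (by rw [hadef]; linarith)
        (by linarith) (by rw [ha2]; linarith)
        (ae_of_all _ fun t => hK0 t) (hKint a (a+2*π))
    calc (∫ t in (θ₀'-δ₁)..(θ₀'+δ₁), |g t| * K t) ≤ ε' * ∫ t in (θ₀'-δ₁)..(θ₀'+δ₁), K t :=
          step1.trans (le_of_eq step2)
    _ ≤ ε' * (2*π) := by
          rw [← hnorm]
          exact mul_le_mul_of_nonneg_left step3 hε'0
  -- far pieces
  have hfarbound : ∀ u v : ℝ, (∀ t ∈ Set.Icc u v, K t ≤ B) → u ≤ v → a ≤ u → v ≤ a + 2*π →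
      (∫ t in u..v, |g t| * K t) ≤ B * M := by
    intro u v hKB huv hau hva
    calc (∫ t in u..v, |g t| * K t) ≤ ∫ t in u..v, |g t| * B := by
          apply intervalIntegral.integral_mono_on huv (hgK _ _)
            ((hgint u v).abs.mul_const _)
          intro t ht
          exact mul_le_mul_of_nonneg_left (hKB t ht) (abs_nonneg _)
    _ = B * ∫ t in u..v, |g t| := by
          rw [intervalIntegral.integral_mul_const]
          ring
    _ ≤ B * ∫ t in a..(a+2*π), |g t| := by
          apply mul_le_mul_of_nonneg_left _ hB0
          apply intervalIntegral.integral_mono_interval hau huv hva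
            (ae_of_all _ fun t => abs_nonneg _) (hgint a (a+2*π)).abs
    _ = B * M := by rw [hMshift]
  have hKB1 : ∀ t ∈ Set.Icc a (θ₀'-δ₁), K t ≤ B := by
    intro t ht
    obtain ⟨hta, htb⟩ := ht
    rw [hadef] at hta
    have hl := hθ1.1
    have hu := hθ1.2
    rw [hKdef, hBdef, hcdef]
    apply kernel_bound hr0 hr1 hc0.le hc1
    rw [hcdef]
    apply cos_far hδ₁0 hδ₁π
    · rw [le_abs]
      left
      linarith
    · rw [abs_le]
      constructor <;> linarith
  have hKB2 : ∀ t ∈ Set.Icc (θ₀'+δ₁) (a+2*π), K t ≤ B := by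
    intro t ht
    obtain ⟨hta, htb⟩ := ht
    rw [ha2] at htb
    have hl := hθ1.1
    have hu := hθ1.2
    rw [hKdef, hBdef, hcdef]
    apply kernel_bound hr0 hr1 hc0.le hc1
    rw [hcdef]
    apply cos_far hδ₁0 hδ₁π
    · rw [le_abs]
      right
      linarith
    · rw [abs_le]
      constructor <;> linarith
  have hfar1 : (∫ t in a..(θ₀'-δ₁), |g t| * K t) ≤ B * M :=
    hfarbound a (θ₀'-δ₁) hKB1 (by rw [hadef]; linarith) le_rfl (by rw [ha2]; linarith)
  have hfar2 : (∫ t in (θ₀'+δ₁)..(a+2*π), |g t| * K t) ≤ B * M :=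
    hfarbound (θ₀'+δ₁) (a+2*π) hKB2 (by rw [ha2]; linarith) (by rw [hadef]; linarith) le_rfl
  -- combine
  rw [hdiff]
  calc |(1/(2*π)) * ∫ t in a..(a+2*π), g t * K t|
      ≤ (1/(2*π)) * (∫ t in a..(a+2*π), |g t| * K t) := habs
  _ ≤ (1/(2*π)) * (B * M + (ε' * (2*π) + B * M)) := by
        apply mul_le_mul_of_nonneg_left _ (by positivity)
        rw [hsplit]
        exact add_le_add hfar1 (add_le_add hmid hfar2)
  _ = ε' + B * M / π := by field_simp; ring
  _ = ε' + (1 - r^2) / (1 - Real.cos (δ₁/2)^2) * M / π := by rw [hBdef, hcdef]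
  _ = ε' + (1 - r^2) / (1 - Real.cos (δ₁/2)^2) * (∫ t in (-π)..π, |f t - f θ₀'|) / π := by
        rw [hMdef]

end FatouAux


/-- Fatou's boundary continuity theorem: if the `2π`-periodic integrable `f` is
continuous at `θ₀`, its Poisson integral `U` tends to `f(θ₀)` as `z → e^{iθ₀}`
unrestrictedly within the open unit disc. -/
theorem stmt_5 (f : ℝ → ℝ) (hper : Function.Periodic f (2 * π))
    (hint : IntervalIntegrable f volume (-π) π)
    (θ₀ : ℝ) (hcont : ContinuousAt f θ₀) :
    Tendsto
      (fun z : ℂ =>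
        (1 / (2 * π)) * ∫ t in (-π)..π, f t * fatouPoissonKernel ‖z‖ (z.arg - t))
      (nhdsWithin (Complex.exp (θ₀ * Complex.I)) {z : ℂ | ‖z‖ < 1})
      (nhds (f θ₀)) := by
  have hπ := Real.pi_pos
  have hf : ∀ a b, IntervalIntegrable f volume a b :=
    FatouAux.per_intervalIntegrable hper hint
  rw [Metric.tendsto_nhdsWithin_nhds]
  intro ε hε
  obtain ⟨δ₂, hδ₂0, hδ₂⟩ := Metric.continuousAt_iff.1 hcont (ε/4) (by linarith)
  set δ₁ : ℝ := min (δ₂/2) (π/2) with hδ₁def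
  have hδ₁0 : 0 < δ₁ := lt_min (by linarith) (by linarith)
  have hδ₁π : δ₁ ≤ π/2 := min_le_right _ _
  have hδ₁δ₂ : δ₁ < δ₂ := lt_of_le_of_lt (min_le_left _ _) (by linarith)
  set c : ℝ := Real.cos (δ₁/2) with hc
  have hc0 : 0 < c := Real.cos_pos_of_mem_Ioo ⟨by linarith, by linarith⟩
  have hc1 : c < 1 := by
    have := Real.cos_lt_cos_of_nonneg_of_le_pi (le_refl (0:ℝ))
      (by linarith : δ₁/2 ≤ π) (by linarith : (0:ℝ) < δ₁/2)
    simpa using this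
  have hc2 : 0 < 1 - c^2 := by nlinarith
  set M : ℝ := ∫ t in (-π)..π, |f t - f θ₀| with hM
  have hM0 : 0 ≤ M :=
    intervalIntegral.integral_nonneg (by linarith) (fun t _ => abs_nonneg _)
  set δ : ℝ := min (min (1/2) (δ₁/(2*π))) (ε * (1 - c^2) * π / (8 * (M+1))) with hδdef
  have hδ0 : 0 < δ := lt_min (lt_min (by norm_num) (by positivity)) (by positivity)
  refine ⟨δ, hδ0, ?_⟩
  intro z hz hdist
  rw [Real.dist_eq]
  set r : ℝ := ‖z‖ with hr
  set θ : ℝ := z.arg with hθ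
  have hr0 : 0 ≤ r := norm_nonneg z
  have hr1 : r < 1 := hz
  have hdz : ‖z - Complex.exp (θ₀*Complex.I)‖ < δ := by
    rw [← Complex.dist_eq]
    exact hdist
  have habs1 : ‖Complex.exp ((θ₀:ℂ)*Complex.I)‖ = 1 :=
    Complex.norm_exp_ofReal_mul_I θ₀
  have h1r : 1 - r ≤ ‖z - Complex.exp (θ₀*Complex.I)‖ := by
    calc 1 - r = ‖Complex.exp ((θ₀:ℂ)*Complex.I)‖ - ‖z‖ := by
          rw [habs1, hr]
    _ ≤ ‖Complex.exp ((θ₀:ℂ)*Complex.I) - z‖ := by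
          have := norm_sub_norm_le (Complex.exp ((θ₀:ℂ)*Complex.I)) z
          simpa using this
    _ = ‖z - Complex.exp (θ₀*Complex.I)‖ := by
          rw [norm_sub_rev]
  have h1rδ : 1 - r < δ := lt_of_le_of_lt h1r hdz
  have hexp : ‖Complex.exp (θ*Complex.I) - Complex.exp (θ₀*Complex.I)‖ ≤ 2*δ := by
    have hzeq : (r:ℂ) * Complex.exp (θ*Complex.I) = z := by
      simpa [hr, hθ] using Complex.norm_mul_exp_arg_mul_I z
    calc ‖Complex.exp (θ*Complex.I) - Complex.exp (θ₀*Complex.I)‖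
        ≤ ‖Complex.exp (θ*Complex.I) - z‖
          + ‖z - Complex.exp (θ₀*Complex.I)‖ :=
          norm_sub_le_norm_sub_add_norm_sub _ z _
    _ ≤ (1 - r) + δ := by
          apply add_le_add _ hdz.le
          have he : Complex.exp (θ*Complex.I) - z = ((1 - r : ℝ):ℂ) * Complex.exp (θ*Complex.I) := by
            rw [← hzeq]
            push_cast
            ring
          rw [he, norm_mul, Complex.norm_exp_ofReal_mul_I, mul_one, Complex.norm_real, Real.norm_eq_abs,
            _root_.abs_of_nonneg (by linarith)]
    _ ≤ 2*δ := by linarith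
  obtain ⟨k, hk⟩ := FatouAux.angle_close hexp
  set θ₀' : ℝ := θ₀ + 2*π*k with hθ₀'
  have hδsmall : δ ≤ δ₁/(2*π) := le_trans (min_le_left _ _) (min_le_right _ _)
  have hθclose : |θ - θ₀'| ≤ δ₁/2 := by
    calc |θ - θ₀'| ≤ (π/2)*(2*δ) := hk
    _ = π * δ := by ring
    _ ≤ π * (δ₁/(2*π)) := mul_le_mul_of_nonneg_left hδsmall (le_of_lt hπ)
    _ = δ₁/2 := by field_simp
  have hfval : f θ₀' = f θ₀ := by
    rw [hθ₀', show θ₀ + 2*π*(k:ℝ) = θ₀ + (k:ℝ)*(2*π) by ring]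
    exact (hper.int_mul k) θ₀
  have hnear : ∀ t, |t - θ₀'| ≤ δ₁ → |f t - f θ₀'| ≤ ε/4 := by
    intro t ht
    have hft : f t = f (t - (k:ℝ)*(2*π)) := (hper.sub_int_mul_eq k).symm
    rw [hfval, hft]
    apply le_of_lt
    have hd : dist (t - (k:ℝ)*(2*π)) θ₀ < δ₂ := by
      rw [Real.dist_eq, show t - (k:ℝ)*(2*π) - θ₀ = t - θ₀' by rw [hθ₀']; ring]
      exact lt_of_le_of_lt ht hδ₁δ₂
    have := hδ₂ hd
    rwa [Real.dist_eq] at this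
  have hkey := FatouAux.key f hper hf θ₀' θ r δ₁ (ε/4) hr0 hr1 hδ₁0 hδ₁π hθclose hnear
  have hMeq : (∫ t in (-π)..π, |f t - f θ₀'|) = M := by
    rw [hM]
    congr 1
    funext t
    rw [hfval]
  rw [hMeq, hfval] at hkey
  clear_value δ₁ c M δ r θ θ₀'
  have hBsmall : (1 - r^2)/(1 - c^2) * M / π ≤ ε/4 := by
    have h2 : 1 - r^2 ≤ 2*δ := by nlinarith
    have hδε : δ ≤ ε * (1 - c^2) * π / (8 * (M+1)) := by rw [hδdef]; exact min_le_right _ _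
    have hδε' : δ * (8*(M+1)) ≤ ε * (1 - c^2) * π := by
      rw [← le_div_iff₀ (by positivity)]
      exact hδε
    have e1 : (1 - r^2)/(1-c^2)*M/π = (1-r^2)*M/((1-c^2)*π) := by
      rw [div_mul_eq_mul_div, div_div]
    rw [e1, div_le_iff₀ (by positivity)]
    have p1 : (1 - r^2)*M ≤ 2*δ*M := mul_le_mul_of_nonneg_right h2 hM0
    linarith only [p1, hδε', hδ0.le]
  calc |(1/(2*π)) * (∫ t in (-π)..π, f t * fatouPoissonKernel r (θ - t)) - f θ₀|
      ≤ ε/4 + (1 - r^2)/(1 - Real.cos (δ₁/2)^2) * M / π := hkey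
  _ ≤ ε/4 + ε/4 := by
      have hb2 : (1 - r^2)/(1 - Real.cos (δ₁/2)^2) * M / π ≤ ε/4 := by
        rw [← hc]
        exact hBsmall
      linarith
  _ < ε := by linarith
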